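/- Exact penalty theorem: Assume assoc_S(A) > 0 for every nonempty A ⊆ V'. Let A_0 ⊆ V' be feasible and let θ > 0 satisfy pen(A) ≥ θ for every nonempty infeasible A ⊆ V'. If γ > (vol_d(V)/θ)·(vol_g(A_0) + ν_S)/assoc_S(A_0), where vol_d(V) = ∑_{i∈V} d(i), then every minimizer over nonempty subsets A ⊆ V' of F_γ(A) := (vol_g(A) + ν_S + γ·pen(A))/assoc_S(A) is feasible; moreover min_{∅≠A⊆V'} F_γ(A) = min over feasible A of (vol_g(A) + ν_S)/assoc_S(A), and the minimizers of F_γ are exactly the feasible sets maximizing assoc_S(A)/(vol_g(A) + ν_S). -/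
import Mathlib


open Finset

/-- `Vp S` is the set of experts `V' = V \ S`, as a subtype. -/
abbrev Vp {V : Type*} [Fintype V] [DecidableEq V] (S : Finset V) := {x : V // x ∉ S}

/-- **Exact penalty theorem.** Every minimizer of the penalized ratio
`F_γ(A) = (vol_g(A) + ν_S + γ·pen(A))/assoc_S(A)` over nonempty `A ⊆ V'` is feasible;
the minimum equals the minimum over feasible sets of `(vol_g(A) + ν_S)/assoc_S(A)`;
and the minimizers of `F_γ` are exactly the feasible sets maximizing
`assoc_S(A)/(vol_g(A) + ν_S)`. -/
theorem exact_penalty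
    {V : Type*} [Fintype V] [DecidableEq V] (hV : Nonempty V)
    (w : V → V → ℝ) (hw_symm : ∀ i j, w i j = w j i) (hw_nonneg : ∀ i j, 0 ≤ w i j)
    (g : V → ℝ) (hg : ∀ i, 0 < g i)
    (S : Finset V) (hVp : Nonempty (Vp S))
    (p : ℕ) (hp : 1 ≤ p)
    (M : Fin p → Vp S → ℝ) (hM : ∀ j i, 0 ≤ M j i) (k l : Fin p → ℝ)
    (dist : Vp S → Vp S → ℝ) (hdist_symm : ∀ u v, dist u v = dist v u)
    (hdist_nonneg : ∀ u v, 0 ≤ dist u v) (d0 : ℝ) (hd0 : 0 ≤ d0)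
    -- the degree function d, the restricted degrees d^S, and the constants μ_S, ν_S
    (deg : V → ℝ) (hdeg : deg = fun i => ∑ j, w i j)
    (degS : Vp S → ℝ) (hdegS : degS = fun i => ∑ j ∈ S, w i.1 j)
    (muS nuS : ℝ) (hmuS : muS = ∑ i ∈ S, ∑ j ∈ S, w i j) (hnuS : nuS = ∑ i ∈ S, g i)
    -- assoc_S(A) = vol_d(A) − cut(A, V'∖A) + vol_{d^S}(A) + μ_S·unit(A)
    (assocS : Finset (Vp S) → ℝ)
    (hassocS : assocS = fun A => (∑ i ∈ A, deg i.1) - (∑ i ∈ A, ∑ j ∈ Aᶜ, w i.1 j.1)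
        + (∑ i ∈ A, degS i) + muS * (if A = ∅ then 0 else 1))
    -- the penalty function
    (pen : Finset (Vp S) → ℝ)
    (hpen : pen = fun A => if A = ∅ then 0 else
        (∑ j, max 0 ((∑ i ∈ A, M j i) - l j)) + (∑ j, max 0 (k j - ∑ i ∈ A, M j i))
        + ∑ u ∈ A, ∑ v ∈ A, max 0 (dist u v - d0))
    -- feasibility
    (Feasible : Finset (Vp S) → Prop)
    (hFeas : Feasible = fun A => A.Nonempty
        ∧ (∀ j, k j ≤ (∑ i ∈ A, M j i) ∧ (∑ i ∈ A, M j i) ≤ l j)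
        ∧ ∀ u ∈ A, ∀ v ∈ A, dist u v ≤ d0)
    -- assumptions of the theorem
    (hassoc_pos : ∀ A : Finset (Vp S), A.Nonempty → 0 < assocS A)
    (A0 : Finset (Vp S)) (hA0 : Feasible A0)
    (θ : ℝ) (hθ : 0 < θ)
    (hθpen : ∀ A : Finset (Vp S), A.Nonempty → ¬ Feasible A → θ ≤ pen A)
    (γ : ℝ)
    (hγ : ((∑ i, deg i) / θ) * (((∑ i ∈ A0, g i.1) + nuS) / assocS A0) < γ)
    -- the penalized objective F_γ
    (Fγ : Finset (Vp S) → ℝ)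
    (hFγ : Fγ = fun A => ((∑ i ∈ A, g i.1) + nuS + γ * pen A) / assocS A) :
    -- 1) every minimizer of F_γ over nonempty sets is feasible
    (∀ A : Finset (Vp S), A.Nonempty →
        (∀ B : Finset (Vp S), B.Nonempty → Fγ A ≤ Fγ B) → Feasible A)
    -- 2) min of F_γ over nonempty sets = min over feasible sets of the unpenalized ratio
    ∧ sInf {x : ℝ | ∃ A : Finset (Vp S), A.Nonempty ∧ x = Fγ A}
        = sInf {x : ℝ | ∃ A : Finset (Vp S), Feasible A ∧
            x = ((∑ i ∈ A, g i.1) + nuS) / assocS A}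
    -- 3) minimizers of F_γ are exactly the feasible sets maximizing the density
    ∧ ∀ A : Finset (Vp S), A.Nonempty →
        ((∀ B : Finset (Vp S), B.Nonempty → Fγ A ≤ Fγ B) ↔
          (Feasible A ∧ ∀ B : Finset (Vp S), Feasible B →
            assocS B / ((∑ i ∈ B, g i.1) + nuS) ≤ assocS A / ((∑ i ∈ A, g i.1) + nuS))) := by
  classical
  -- basic positivity facts
  have hdeg_nonneg : ∀ i, 0 ≤ deg i := by
    intro i; rw [hdeg]; exact Finset.sum_nonneg fun j _ => hw_nonneg i j
  set D : ℝ := ∑ i, deg i with hD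
  have hD_nonneg : 0 ≤ D := Finset.sum_nonneg fun i _ => hdeg_nonneg i
  have hnuS_nonneg : 0 ≤ nuS := by
    rw [hnuS]; exact Finset.sum_nonneg fun i _ => (hg i).le
  have hvg_pos : ∀ A : Finset (Vp S), A.Nonempty → 0 < (∑ i ∈ A, g i.1) + nuS := by
    intro A hA
    have h1 : 0 < ∑ i ∈ A, g i.1 := Finset.sum_pos (fun i _ => hg i.1) hA
    linarith
  have hpen_nonneg : ∀ A, 0 ≤ pen A := by
    intro A; rw [hpen]; dsimp only
    split
    · exact le_refl 0
    · have h1 : 0 ≤ ∑ j, max 0 ((∑ i ∈ A, M j i) - l j) :=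
        Finset.sum_nonneg fun j _ => le_max_left _ _
      have h2 : 0 ≤ ∑ j, max 0 (k j - ∑ i ∈ A, M j i) :=
        Finset.sum_nonneg fun j _ => le_max_left _ _
      have h3 : 0 ≤ ∑ u ∈ A, ∑ v ∈ A, max 0 (dist u v - d0) :=
        Finset.sum_nonneg fun u _ => Finset.sum_nonneg fun v _ => le_max_left _ _
      linarith
  have hFeas_ne : ∀ A, Feasible A → A.Nonempty := by
    intro A hA; rw [hFeas] at hA; exact hA.1
  have hpen_feas : ∀ A, Feasible A → pen A = 0 := by
    intro A hA
    rw [hFeas] at hA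
    obtain ⟨hne, hkl, hdst⟩ := hA
    rw [hpen]; dsimp only
    rw [if_neg hne.ne_empty]
    have e1 : (∑ j, max 0 ((∑ i ∈ A, M j i) - l j)) = 0 :=
      Finset.sum_eq_zero fun j _ => max_eq_left (sub_nonpos.mpr (hkl j).2)
    have e2 : (∑ j, max 0 (k j - ∑ i ∈ A, M j i)) = 0 :=
      Finset.sum_eq_zero fun j _ => max_eq_left (sub_nonpos.mpr (hkl j).1)
    have e3 : (∑ u ∈ A, ∑ v ∈ A, max 0 (dist u v - d0)) = 0 :=
      Finset.sum_eq_zero fun u hu => Finset.sum_eq_zero fun v hv =>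
        max_eq_left (sub_nonpos.mpr (hdst u hu v hv))
    rw [e1, e2, e3]; ring
  -- the key bound assocS A ≤ D
  have hassoc_le : ∀ A : Finset (Vp S), assocS A ≤ D := by
    intro A
    rw [hassocS]; dsimp only
    set A' : Finset V := A.map ⟨Subtype.val, Subtype.val_injective⟩ with hA'
    have hsum1 : (∑ i ∈ A, deg i.1) = ∑ i ∈ A', deg i := by
      rw [hA', Finset.sum_map]; rfl
    have hsum2 : (∑ i ∈ A, degS i) = ∑ i ∈ A', ∑ j ∈ S, w i j := by
      rw [hdegS, hA', Finset.sum_map]; rfl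
    have hdisj : Disjoint A' S := by
      rw [Finset.disjoint_left]
      intro x hx hxS
      rw [hA', Finset.mem_map] at hx
      obtain ⟨a, _, rfl⟩ := hx
      exact a.2 hxS
    have hcut : 0 ≤ ∑ i ∈ A, ∑ j ∈ Aᶜ, w i.1 j.1 :=
      Finset.sum_nonneg fun i _ => Finset.sum_nonneg fun j _ => hw_nonneg _ _
    have hmuS_nonneg : 0 ≤ muS := by
      rw [hmuS]
      exact Finset.sum_nonneg fun i _ => Finset.sum_nonneg fun j _ => hw_nonneg _ _
    have hmu_le : muS * (if A = ∅ then 0 else 1) ≤ muS := by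
      split <;> nlinarith
    have key : (∑ i ∈ A', ∑ j ∈ S, w i j) + muS ≤ ∑ j ∈ S, deg j := by
      have h1 : (∑ i ∈ A', ∑ j ∈ S, w i j) + muS = ∑ i ∈ A' ∪ S, ∑ j ∈ S, w i j := by
        rw [Finset.sum_union hdisj, hmuS]
      have h2 : (∑ i ∈ A' ∪ S, ∑ j ∈ S, w i j) ≤ ∑ i : V, ∑ j ∈ S, w i j := by
        apply Finset.sum_le_sum_of_subset_of_nonneg (Finset.subset_univ _)
        intro i _ _
        exact Finset.sum_nonneg fun j _ => hw_nonneg _ _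
      have h3 : (∑ i : V, ∑ j ∈ S, w i j) = ∑ j ∈ S, deg j := by
        rw [Finset.sum_comm, hdeg]
        exact Finset.sum_congr rfl fun j _ =>
          Finset.sum_congr rfl fun i _ => hw_symm i j
      linarith
    have h4 : (∑ i ∈ A', deg i) + ∑ j ∈ S, deg j ≤ D := by
      rw [← Finset.sum_union hdisj]
      exact Finset.sum_le_sum_of_subset_of_nonneg (Finset.subset_univ _)
        fun i _ _ => hdeg_nonneg i
    rw [hsum1, hsum2]
    linarith
  -- nonemptiness, positivity of D and γ
  have hA0ne : A0.Nonempty := hFeas_ne A0 hA0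
  have hD_pos : 0 < D := lt_of_lt_of_le (hassoc_pos A0 hA0ne) (hassoc_le A0)
  have hγpos : 0 < γ := by
    refine lt_of_le_of_lt ?_ hγ
    exact mul_nonneg (div_nonneg hD_nonneg hθ.le)
      (div_nonneg (hvg_pos A0 hA0ne).le (hassoc_pos A0 hA0ne).le)
  -- Fγ on feasible sets is the plain ratio
  have hFgfeas : ∀ A, Feasible A →
      Fγ A = ((∑ i ∈ A, g i.1) + nuS) / assocS A := by
    intro A hA
    rw [hFγ]; dsimp only
    rw [hpen_feas A hA, mul_zero, add_zero]
  -- the threshold inequality from hγ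
  have hr0 : ((∑ i ∈ A0, g i.1) + nuS) / assocS A0 < γ * θ / D := by
    rw [div_mul_eq_mul_div, div_lt_iff₀ hθ] at hγ
    rw [lt_div_iff₀ hD_pos, mul_comm]
    exact hγ
  -- the key comparison: infeasible sets have strictly larger objective than A0
  have hmain : ∀ B : Finset (Vp S), B.Nonempty → ¬ Feasible B → Fγ A0 < Fγ B := by
    intro B hBne hfB
    have hB1 : γ * θ / D ≤ γ * θ / assocS B := by
      apply div_le_div_of_nonneg_left (by positivity) (hassoc_pos B hBne) (hassoc_le B)
    have hB2 : γ * θ / assocS B ≤ Fγ B := by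
      rw [hFγ]; dsimp only
      apply (div_le_div_iff_of_pos_right (hassoc_pos B hBne)).mpr
      have hvg : 0 < (∑ i ∈ B, g i.1) + nuS := hvg_pos B hBne
      have hpθ : θ ≤ pen B := hθpen B hBne hfB
      nlinarith
    rw [hFgfeas A0 hA0]
    calc ((∑ i ∈ A0, g i.1) + nuS) / assocS A0 < γ * θ / D := hr0
      _ ≤ γ * θ / assocS B := hB1
      _ ≤ Fγ B := hB2
  -- Part 1
  have part1 : ∀ A : Finset (Vp S), A.Nonempty →
      (∀ B : Finset (Vp S), B.Nonempty → Fγ A ≤ Fγ B) → Feasible A := by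
    intro A hAne hmin
    by_contra hfA
    have h1 := hmain A hAne hfA
    have h2 := hmin A0 hA0ne
    linarith
  refine ⟨part1, ?_, ?_⟩
  · -- Part 2
    set T1 : Set ℝ := {x | ∃ A : Finset (Vp S), A.Nonempty ∧ x = Fγ A} with hT1
    set T2 : Set ℝ := {x | ∃ A : Finset (Vp S), Feasible A ∧
        x = ((∑ i ∈ A, g i.1) + nuS) / assocS A} with hT2
    have hT1fin : T1.Finite := by
      apply (Set.finite_range Fγ).subset
      rintro x ⟨A, _, rfl⟩; exact ⟨A, rfl⟩
    have hT2fin : T2.Finite := by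
      apply (Set.finite_range fun A : Finset (Vp S) =>
        ((∑ i ∈ A, g i.1) + nuS) / assocS A).subset
      rintro x ⟨A, _, rfl⟩; exact ⟨A, rfl⟩
    have hT1ne : T1.Nonempty := ⟨Fγ A0, A0, hA0ne, rfl⟩
    have hT2ne : T2.Nonempty := ⟨_, A0, hA0, rfl⟩
    have hm1 : sInf T1 ∈ T1 := hT1ne.csInf_mem hT1fin
    have hm2 : sInf T2 ∈ T2 := hT2ne.csInf_mem hT2fin
    obtain ⟨Astar, hAstarne, hAstar⟩ := hm1
    obtain ⟨B2, hB2f, hB2⟩ := hm2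
    have hmin : ∀ B : Finset (Vp S), B.Nonempty → Fγ Astar ≤ Fγ B := by
      intro B hBne
      rw [← hAstar]
      exact csInf_le hT1fin.bddBelow ⟨B, hBne, rfl⟩
    have hfAstar : Feasible Astar := part1 Astar hAstarne hmin
    apply le_antisymm
    · -- sInf T1 ≤ sInf T2
      rw [hB2]
      have : ((∑ i ∈ B2, g i.1) + nuS) / assocS B2 = Fγ B2 := (hFgfeas B2 hB2f).symm
      rw [this]
      exact csInf_le hT1fin.bddBelow ⟨B2, hFeas_ne B2 hB2f, rfl⟩
    · -- sInf T2 ≤ sInf T1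
      rw [hAstar, hFgfeas Astar hfAstar]
      exact csInf_le hT2fin.bddBelow ⟨Astar, hfAstar, rfl⟩
  · -- Part 3
    intro A hAne
    constructor
    · intro hmin
      have hfA := part1 A hAne hmin
      refine ⟨hfA, ?_⟩
      intro B hfB
      have hBne := hFeas_ne B hfB
      have h := hmin B hBne
      rw [hFgfeas A hfA, hFgfeas B hfB] at h
      have h' := (div_le_div_iff₀ (hassoc_pos A hAne) (hassoc_pos B hBne)).mp h
      rw [div_le_div_iff₀ (hvg_pos B hBne) (hvg_pos A hAne)]
      nlinarith
    · rintro ⟨hfA, hmax⟩ B hBne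
      by_cases hfB : Feasible B
      · have hd := hmax B hfB
        rw [div_le_div_iff₀ (hvg_pos B (hFeas_ne B hfB)) (hvg_pos A hAne)] at hd
        rw [hFgfeas A hfA, hFgfeas B hfB,
          div_le_div_iff₀ (hassoc_pos A hAne) (hassoc_pos B (hFeas_ne B hfB))]
        nlinarith
      · have h1 := hmain B hBne hfB
        have hd := hmax A0 hA0
        rw [div_le_div_iff₀ (hvg_pos A0 hA0ne) (hvg_pos A hAne)] at hd
        have h2 : Fγ A ≤ Fγ A0 := by
          rw [hFgfeas A hfA, hFgfeas A0 hA0,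
            div_le_div_iff₀ (hassoc_pos A hAne) (hassoc_pos A0 hA0ne)]
          nlinarith
        linarith
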